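/- (Radial derivative of the cubic phase at cone-aligned configurations.) Let ξ̄, η̄, σ̄ ∈ ℝ×ℝ² with ρ̄ = (ρ₀,ρ) = ξ̄−η̄−σ̄. Assume η ≠ 0, ρ ≠ 0, the cone condition |η|² = 3η₀² holds (so η₀ ≠ 0 and |η̄| = 2|η₀|), and η = θ(|η|/|ρ|)ρ for some θ ∈ {−1, 1} (η and ρ aligned). Then the radial derivative of the cubic phase at η̄ satisfies (η̄/|η̄|) · ∇_η̄ φ₃(ξ̄,η̄,σ̄) = (η₀/|η̄|) · [(√3 ρ₀ + θ·sign(η₀)·|ρ|)² − 12η₀²]. -/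

import Mathlib

noncomputable section

open scoped RealInnerProductSpace

/-- The frequency space `ℝ × ℝ²`, represented as Euclidean `ℝ³`:
coordinate `0` is `v₀` and coordinates `1, 2` form the spatial part `v`,
so that `|v̄| = ‖v̄‖` is the Euclidean norm of the full vector. -/
abbrev E3 : Type := EuclideanSpace ℝ (Fin 3)

/-- The dispersion relation `ω(v̄) = v₀(v₀² + |v|²)`. -/
def omega (v : E3) : ℝ := v 0 * ((v 0) ^ 2 + (v 1) ^ 2 + (v 2) ^ 2)

/-- The cubic phase `φ₃(ξ̄,η̄,σ̄) = ω(ξ̄) − ω(η̄) − ω(σ̄) − ω(ρ̄)` with `ρ̄ = ξ̄ − η̄ − σ̄`. -/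
def phi3 (ξ η σ : E3) : ℝ := omega ξ - omega η - omega σ - omega (ξ - η - σ)

/-- The norm `|v|` of the spatial part `v = (v₁, v₂)` of `v̄`. -/
def snorm2 (v : E3) : ℝ := Real.sqrt ((v 1) ^ 2 + (v 2) ^ 2)


lemma hasFDerivAt_omega (v : E3) : HasFDerivAt omega
    (((3 * v 0 ^ 2 + v 1 ^ 2 + v 2 ^ 2) • EuclideanSpace.proj (0 : Fin 3)
      + (2 * v 0 * v 1) • EuclideanSpace.proj (1 : Fin 3)
      + (2 * v 0 * v 2) • EuclideanSpace.proj (2 : Fin 3) : E3 →L[ℝ] ℝ)) v := by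
  have h0 : HasFDerivAt (fun w : E3 => w 0) (EuclideanSpace.proj (0 : Fin 3) : E3 →L[ℝ] ℝ) v :=
    (EuclideanSpace.proj (0 : Fin 3) : E3 →L[ℝ] ℝ).hasFDerivAt
  have h1 : HasFDerivAt (fun w : E3 => w 1) (EuclideanSpace.proj (1 : Fin 3) : E3 →L[ℝ] ℝ) v :=
    (EuclideanSpace.proj (1 : Fin 3) : E3 →L[ℝ] ℝ).hasFDerivAt
  have h2 : HasFDerivAt (fun w : E3 => w 2) (EuclideanSpace.proj (2 : Fin 3) : E3 →L[ℝ] ℝ) v :=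
    (EuclideanSpace.proj (2 : Fin 3) : E3 →L[ℝ] ℝ).hasFDerivAt
  have H := h0.mul (((h0.mul h0).add (h1.mul h1)).add (h2.mul h2))
  have hfun : omega = fun w : E3 => w 0 * (w 0 * w 0 + w 1 * w 1 + w 2 * w 2) := by
    funext w; simp only [omega]; ring
  rw [hfun]
  refine H.congr_fderiv ?_
  ext u
  simp only [ContinuousLinearMap.add_apply, ContinuousLinearMap.smul_apply, PiLp.proj_apply,
    smul_eq_mul, Pi.add_apply, Pi.mul_apply]
  ring

lemma fderiv_phi3 (ξ η σ ρ : E3) (hρdef : ρ = ξ - η - σ) :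
    fderiv ℝ (fun η' => phi3 ξ η' σ) η η =
      -((3 * η 0 ^ 2 + η 1 ^ 2 + η 2 ^ 2) * η 0 + 2 * η 0 * η 1 * η 1 + 2 * η 0 * η 2 * η 2)
      + ((3 * ρ 0 ^ 2 + ρ 1 ^ 2 + ρ 2 ^ 2) * η 0 + 2 * ρ 0 * ρ 1 * η 1 + 2 * ρ 0 * ρ 2 * η 2) := by
  have hA : HasFDerivAt (fun w : E3 => ξ - w - σ) (-(ContinuousLinearMap.id ℝ E3)) η := by
    have := ((hasFDerivAt_const (𝕜 := ℝ) ξ η).sub (hasFDerivAt_id (𝕜 := ℝ) η)).sub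
      (hasFDerivAt_const (𝕜 := ℝ) σ η)
    refine this.congr_fderiv ?_
    simp
  have hout : HasFDerivAt omega _ (ξ - η - σ) := hasFDerivAt_omega (ξ - η - σ)
  have hcomp := hout.comp η hA
  have H := (((hasFDerivAt_const (𝕜 := ℝ) (omega ξ) η).sub (hasFDerivAt_omega η)).sub
      (hasFDerivAt_const (𝕜 := ℝ) (omega σ) η)).sub hcomp
  have H' : HasFDerivAt (fun η' => phi3 ξ η' σ) _ η := H
  rw [H'.fderiv, hρdef]
  simp only [ContinuousLinearMap.coe_sub', ContinuousLinearMap.coe_comp', Pi.sub_apply,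
    Function.comp_apply, ContinuousLinearMap.add_apply, ContinuousLinearMap.smul_apply,
    PiLp.proj_apply, smul_eq_mul, ContinuousLinearMap.zero_apply, ContinuousLinearMap.neg_apply,
    ContinuousLinearMap.id_apply, PiLp.neg_apply]
  ring

set_option maxHeartbeats 1000000 in
/-- radial derivative of the cubic phase at cone-aligned
configurations: if `η ≠ 0`, `ρ ≠ 0`, `|η|² = 3η₀²` and `η = θ(|η|/|ρ|)ρ` with
`θ ∈ {−1,1}`, then `(η̄/|η̄|)·∇_η̄ φ₃ = (η₀/|η̄|)[(√3ρ₀ + θ·sign(η₀)·|ρ|)² − 12η₀²]`. -/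
theorem stmt_16 (ξ η σ ρ : E3) (θ : ℝ) (hρdef : ρ = ξ - η - σ)
    (hη : ¬(η 1 = 0 ∧ η 2 = 0)) (hρs : ¬(ρ 1 = 0 ∧ ρ 2 = 0))
    (hcone : (η 1) ^ 2 + (η 2) ^ 2 = 3 * (η 0) ^ 2)
    (hθ : θ = 1 ∨ θ = -1)
    (halign1 : η 1 = θ * (snorm2 η / snorm2 ρ) * ρ 1)
    (halign2 : η 2 = θ * (snorm2 η / snorm2 ρ) * ρ 2) :
    ⟪‖η‖⁻¹ • η, gradient (fun η' => phi3 ξ η' σ) η⟫ =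
      (η 0 / ‖η‖) *
        ((Real.sqrt 3 * ρ 0 + θ * Real.sign (η 0) * snorm2 ρ) ^ 2 - 12 * (η 0) ^ 2) := by

  rw [real_inner_smul_left, real_inner_comm]
  have hgrad : ⟪gradient (fun η' => phi3 ξ η' σ) η, η⟫ =
      fderiv ℝ (fun η' => phi3 ξ η' σ) η η := by
    simp only [gradient]
    exact InnerProductSpace.toDual_symm_apply
  rw [hgrad, fderiv_phi3 ξ η σ ρ hρdef]
  have ha : η 0 ≠ 0 := by
    intro h
    rw [h] at hcone
    apply hη
    constructor <;> nlinarith [sq_nonneg (η 1), sq_nonneg (η 2)]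
  have hspos : 0 < snorm2 ρ := by
    apply Real.sqrt_pos.mpr
    rcases not_and_or.mp hρs with h | h <;> positivity
  have hs2 : snorm2 ρ ^ 2 = ρ 1 ^ 2 + ρ 2 ^ 2 := by
    rw [snorm2]; exact Real.sq_sqrt (by positivity)
  have ht : snorm2 η = Real.sqrt 3 * |η 0| := by
    rw [snorm2, hcone, show (3 : ℝ) * η 0 ^ 2 = 3 * (η 0 ^ 2) from rfl,
      Real.sqrt_mul (by norm_num), Real.sqrt_sq_eq_abs]
  have h3 : Real.sqrt 3 ^ 2 = 3 := Real.sq_sqrt (by norm_num)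
  have hθ2 : θ ^ 2 = 1 := by rcases hθ with h | h <;> rw [h] <;> norm_num
  have hg2 : Real.sign (η 0) ^ 2 = 1 := by
    rcases lt_or_gt_of_ne ha with h | h
    · rw [Real.sign_of_neg h]; norm_num
    · rw [Real.sign_of_pos h]; norm_num
  have hga : Real.sign (η 0) * η 0 = |η 0| := by
    rcases lt_or_gt_of_ne ha with h | h
    · rw [Real.sign_of_neg h, abs_of_neg h]; ring
    · rw [Real.sign_of_pos h, abs_of_pos h]; ring
  have hcross : 2 * ρ 0 * ρ 1 * η 1 + 2 * ρ 0 * ρ 2 * η 2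
      = 2 * ρ 0 * θ * Real.sqrt 3 * |η 0| * snorm2 ρ := by
    rw [halign1, halign2, ht]
    have hsne : snorm2 ρ ≠ 0 := ne_of_gt hspos
    field_simp
    linear_combination (-ρ 0 * θ) * hs2
  have key : -((3 * η 0 ^ 2 + η 1 ^ 2 + η 2 ^ 2) * η 0 + 2 * η 0 * η 1 * η 1 + 2 * η 0 * η 2 * η 2)
      + ((3 * ρ 0 ^ 2 + ρ 1 ^ 2 + ρ 2 ^ 2) * η 0 + 2 * ρ 0 * ρ 1 * η 1 + 2 * ρ 0 * ρ 2 * η 2)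
      = η 0 * ((Real.sqrt 3 * ρ 0 + θ * Real.sign (η 0) * snorm2 ρ) ^ 2 - 12 * (η 0) ^ 2) := by
    linear_combination hcross - (3 * η 0) * hcone - (η 0) * hs2 - (η 0 * ρ 0 ^ 2) * h3
      - (η 0 * Real.sign (η 0) ^ 2 * snorm2 ρ ^ 2) * hθ2 - (η 0 * snorm2 ρ ^ 2) * hg2
      - (2 * Real.sqrt 3 * ρ 0 * θ * snorm2 ρ) * hga
  rw [key, div_eq_mul_inv]
  ring
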